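/- If G is a non-complete double-critical k-chromatic graph, then G does not contain the complete graph K_{k-1} as a subgraph. -/

import Mathlib

open SimpleGraph

/-- A graph is vertex-critical if deleting any vertex decreases the chromatic number. -/
def VertexCritical {V : Type} (G : SimpleGraph V) : Prop :=
  ∀ v : V, (G.induce ({v}ᶜ : Set V)).chromaticNumber < G.chromaticNumber

/-- A vertex-critical graph is double-critical if deleting the two end-vertices of any
edge decreases the chromatic number by at least two. -/
def DoubleCritical {V : Type} (G : SimpleGraph V) : Prop :=
  VertexCritical G ∧
  ∀ x y : V, G.Adj x y →
    (G.induce ({x, y}ᶜ : Set V)).chromaticNumber + 2 ≤ G.chromaticNumber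

/-- On a subsingleton vertex type, every simple graph is complete. -/
lemma aux_top_of_subsingleton {V : Type} (hs : Subsingleton V) (G : SimpleGraph V) :
    G = ⊤ := by
  ext v w
  simp only [top_adj]
  constructor
  · exact fun h => G.ne_of_adj h
  · intro h
    exact absurd (hs.elim v w) h

/-- A clique inside an induced colorable subgraph bounds the number of colors. -/
lemma aux_clique_card_le {V : Type} {G : SimpleGraph V} {s : Set V} {T : Finset V}
    (hT : (T : Set V).Pairwise G.Adj) (hTs : (T : Set V) ⊆ s) {n : ℕ}
    (h : (G.induce s).Colorable n) : T.card ≤ n := by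
  obtain ⟨c⟩ := h
  have hinj : Function.Injective
      (fun v : {x // x ∈ T} => c ⟨v.1, hTs (Finset.mem_coe.mpr v.2)⟩) := by
    intro v w hvw
    by_contra hne
    have hvw' : (v : V) ≠ (w : V) := fun h' => hne (Subtype.ext h')
    have hadj : G.Adj (v : V) (w : V) :=
      hT (Finset.mem_coe.mpr v.2) (Finset.mem_coe.mpr w.2) hvw'
    exact c.valid
      (show (G.induce s).Adj ⟨v.1, hTs (Finset.mem_coe.mpr v.2)⟩
        ⟨w.1, hTs (Finset.mem_coe.mpr w.2)⟩ from hadj) hvw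
  calc T.card = Fintype.card {x // x ∈ T} := (Fintype.card_coe T).symm
    _ ≤ Fintype.card (Fin n) := Fintype.card_le_of_injective _ hinj
    _ = n := Fintype.card_fin n

lemma aux_colorable_of_lt {V : Type} {G : SimpleGraph V} {k : ℕ}
    (h : G.chromaticNumber < (k : ℕ∞)) : G.Colorable (k - 1) := by
  have hne : G.chromaticNumber ≠ ⊤ := (h.trans (WithTop.coe_lt_top k)).ne
  have hcoe : (G.chromaticNumber.toNat : ℕ∞) = G.chromaticNumber := ENat.coe_toNat hne
  have hmk : G.chromaticNumber.toNat < k := by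
    rw [← hcoe] at h
    exact_mod_cast h
  have hcol : G.Colorable G.chromaticNumber.toNat :=
    chromaticNumber_le_iff_colorable.mp (le_of_eq hcoe.symm)
  exact hcol.mono (by omega)

/-- Key contradiction: a clique of size `k-1` inside a subgraph that is
`(k-2)`-chromatic. -/
lemma aux_contra {V : Type} {G : SimpleGraph V} {t : Set V} {T : Finset V} {k : ℕ}
    (hk : 2 ≤ k) (hT : (T : Set V).Pairwise G.Adj) (hTt : (T : Set V) ⊆ t)
    (hcard : T.card = k - 1)
    (hineq : (G.induce t).chromaticNumber + 2 ≤ (k : ℕ∞)) : False := by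
  have hne : (G.induce t).chromaticNumber ≠ ⊤ := by
    intro h
    rw [h] at hineq
    simp at hineq
  have hcoe : ((G.induce t).chromaticNumber.toNat : ℕ∞) = (G.induce t).chromaticNumber :=
    ENat.coe_toNat hne
  have hcol : (G.induce t).Colorable (G.induce t).chromaticNumber.toNat :=
    chromaticNumber_le_iff_colorable.mp (le_of_eq hcoe.symm)
  have h1 : T.card ≤ (G.induce t).chromaticNumber.toNat := aux_clique_card_le hT hTt hcol
  rw [← hcoe] at hineq
  have h2' : (G.induce t).chromaticNumber.toNat + 2 ≤ k := by exact_mod_cast hineq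
  omega

/-- If `G` is a non-complete double-critical `k`-chromatic graph, then `G` does not contain
the complete graph `K_{k-1}` as a subgraph. -/
theorem stmt0 {V : Type} [Fintype V] (G : SimpleGraph V) (k : ℕ)
    (hnc : G ≠ ⊤) (hdc : DoubleCritical G) (hchrom : G.chromaticNumber = k) :
    ¬ ∃ s : Finset V, s.card = k - 1 ∧ (s : Set V).Pairwise G.Adj := by
  classical
  have hnontriv : Nontrivial V := by
    rw [← not_subsingleton_iff_nontrivial]
    exact fun h => hnc (aux_top_of_subsingleton h G)
  -- k ≥ 2
  have hk2 : 2 ≤ k := by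
    by_contra hlt
    push_neg at hlt
    obtain ⟨v, w, hvw⟩ := exists_pair_ne V
    have h1 := hdc.1 v
    rw [hchrom] at h1
    have hcol := aux_colorable_of_lt h1
    have hk10 : k - 1 = 0 := by omega
    rw [hk10] at hcol
    have hempty := SimpleGraph.isEmpty_of_colorable_zero hcol
    exact hempty.elim ⟨w, by simpa using Ne.symm hvw⟩
  rintro ⟨S, hScard, hSclique⟩
  by_cases hall : ∀ u ∉ S, ∀ s ∈ S, G.Adj u s
  · -- every outside vertex is adjacent to all of S
    by_cases hex : ∃ u, u ∉ S
    · obtain ⟨u, hu⟩ := hex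
      by_cases hex2 : ∃ w, w ∉ S ∧ w ≠ u
      · obtain ⟨w, hw, hwu⟩ := hex2
        have hS0 : S.Nonempty := by
          rw [← Finset.card_pos, hScard]; omega
        obtain ⟨s, hs⟩ := hS0
        have hadj : G.Adj u s := hall u hu s hs
        have hineq := hdc.2 u s hadj
        rw [hchrom] at hineq
        have hwne : w ∉ S.erase s := fun h => hw (Finset.mem_of_mem_erase h)
        have hTcard : (insert w (S.erase s)).card = k - 1 := by
          rw [Finset.card_insert_of_notMem hwne, Finset.card_erase_of_mem hs, hScard]
          omega
        have hTclique : ((insert w (S.erase s) : Finset V) : Set V).Pairwise G.Adj := by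
          intro a ha b hb hab
          simp only [Finset.coe_insert, Set.mem_insert_iff, Finset.mem_coe,
            Finset.mem_erase] at ha hb
          rcases ha with rfl | ha'
          · rcases hb with rfl | hb'
            · exact absurd rfl hab
            · exact hall a hw b hb'.2
          · rcases hb with rfl | hb'
            · exact (hall b hw a ha'.2).symm
            · exact hSclique (Finset.mem_coe.mpr ha'.2) (Finset.mem_coe.mpr hb'.2) hab
        have hTsub : ((insert w (S.erase s) : Finset V) : Set V) ⊆ ({u, s}ᶜ : Set V) := by
          intro a ha
          simp only [Finset.coe_insert, Set.mem_insert_iff, Finset.mem_coe,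
            Finset.mem_erase] at ha
          simp only [Set.mem_compl_iff, Set.mem_insert_iff, Set.mem_singleton_iff]
          push_neg
          rcases ha with rfl | ha'
          · exact ⟨hwu, fun h => hw (h ▸ hs)⟩
          · exact ⟨fun h => hu (h ▸ ha'.2), ha'.1⟩
        exact (aux_contra hk2 hTclique hTsub hTcard hineq).elim
      · -- exactly one vertex outside S : G is complete
        push_neg at hex2
        apply hnc
        ext v' w'
        simp only [top_adj]
        constructor
        · exact fun h => h.ne
        · intro hne
          by_cases hv : v' ∈ S <;> by_cases hw : w' ∈ S
          · exact hSclique (Finset.mem_coe.mpr hv) (Finset.mem_coe.mpr hw) hne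
          · exact (hall w' hw v' hv).symm
          · exact hall v' hv w' hw
          · exact absurd ((hex2 v' hv).trans (hex2 w' hw).symm) hne
    · -- no vertex outside S
      push_neg at hex
      have hSuniv : S = Finset.univ := Finset.eq_univ_iff_forall.mpr hex
      have hcardV : Fintype.card V = k - 1 := by
        rw [← hScard, hSuniv, Finset.card_univ]
      have hle := G.colorable_of_fintype.chromaticNumber_le
      rw [hchrom, hcardV] at hle
      have : k ≤ k - 1 := by exact_mod_cast hle
      omega
  · -- some vertex u outside S has a non-neighbor s in S
    push_neg at hall
    obtain ⟨u, hu, s, hs, hns⟩ := hall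
    have hsu : s ≠ u := fun h => hu (h ▸ hs)
    have hsmem : s ∈ ({u}ᶜ : Set V) := by simpa using hsu
    have h1 := hdc.1 u
    rw [hchrom] at h1
    obtain ⟨c⟩ := aux_colorable_of_lt h1
    by_cases hex : ∃ w : ({u}ᶜ : Set V), G.Adj u w ∧ c w = c ⟨s, hsmem⟩
    · obtain ⟨⟨w, hwmem⟩, hadj, hcw⟩ := hex
      have hwS : w ∉ S := by
        intro hwS
        by_cases hws : w = s
        · subst hws; exact hns hadj
        · have hadjws : G.Adj w s :=
            hSclique (Finset.mem_coe.mpr hwS) (Finset.mem_coe.mpr hs) hws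
          exact c.valid
            (show (G.induce ({u}ᶜ : Set V)).Adj ⟨w, hwmem⟩ ⟨s, hsmem⟩ from hadjws) hcw
      have hineq := hdc.2 u w hadj
      rw [hchrom] at hineq
      have hTsub : (S : Set V) ⊆ ({u, w}ᶜ : Set V) := by
        intro a ha
        simp only [Set.mem_compl_iff, Set.mem_insert_iff, Set.mem_singleton_iff]
        push_neg
        exact ⟨fun h => hu (h ▸ (Finset.mem_coe.mp ha)),
          fun h => hwS (h ▸ (Finset.mem_coe.mp ha))⟩
      exact (aux_contra hk2 hSclique hTsub hScard hineq).elim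
    · -- u misses the color of s : extend to a (k-1)-coloring of G
      push_neg at hex
      have hGcol : G.Colorable (k - 1) := by
        refine ⟨Coloring.mk
          (fun v => if h : v = u then c ⟨s, hsmem⟩ else c ⟨v, by simpa using h⟩) ?_⟩
        intro v w hvw
        by_cases hv : v = u
        · subst hv
          by_cases hw : w = v
          · exact absurd (hw ▸ hvw) (G.irrefl)
          · simp only [dif_pos rfl, dif_neg hw]
            exact fun h => hex ⟨w, by simpa using hw⟩ hvw h.symm
        · by_cases hw : w = u
          · subst hw
            simp only [dif_neg hv, dif_pos rfl]
            exact hex ⟨v, by simpa using hv⟩ hvw.symm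
          · simp only [dif_neg hv, dif_neg hw]
            exact c.valid
              (show (G.induce ({u}ᶜ : Set V)).Adj ⟨v, by simpa using hv⟩
                ⟨w, by simpa using hw⟩ from hvw)
      have hle := hGcol.chromaticNumber_le
      rw [hchrom] at hle
      have : k ≤ k - 1 := by exact_mod_cast hle
      omega
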